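/- For all δ ≥ 0 and λ₀ ≥ 0 there exists λ ≥ 1 (depending only on δ and λ₀) such that the following holds. Let X be a geodesic, δ-hyperbolic, λ₀-bushy metric space. Then for every geodesic segment α ⊆ X (the image of an isometric embedding of a compact real interval into X) there exist two (λ, λ)-quasigeodesic lines γ, γ' : ℝ → X such that: (i) α is contained in N_λ(γ(ℝ)) ∩ N_λ(γ'(ℝ)); and (ii) for every D ≥ 0 and every x ∈ X, if dist(x, γ(ℝ)) ≤ D and dist(x, γ'(ℝ)) ≤ D, then dist(x, α) ≤ D + λ. -/

import Mathlib

open Metric Set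

universe u

/-- A `C`-coarse median on a metric space `X`. -/
def IsCoarseMedian {X : Type*} [MetricSpace X] (C : ℝ) (μ : X → X → X → X) : Prop :=
  (∀ x y z : X, μ x y z = μ y x z) ∧
  (∀ x y z : X, μ x y z = μ x z y) ∧
  (∀ x y : X, μ x x y = x) ∧
  (∀ x y z w : X, dist (μ (μ x w y) w z) (μ x w (μ y w z)) ≤ C) ∧
  (∀ x y z w : X, dist (μ x y z) (μ w y z) ≤ C * dist x w + C)

/-- The coarse median interval `[x,y]_μ = {μ x y z : z ∈ X}`. -/
def cmInterval {X : Type*} [MetricSpace X] (μ : X → X → X → X) (x y : X) : Set X :=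
  {w : X | ∃ z : X, μ x y z = w}

/-- The closed `R`-neighbourhood `{x : dist(x, A) ≤ R}` of a set. -/
def closedNbhd {X : Type*} [MetricSpace X] (R : ℝ) (A : Set X) : Set X :=
  {x : X | Metric.infDist x A ≤ R}

/-- `A` is `D`-quasiconvex with respect to the coarse median `μ`. -/
def IsCMQuasiconvex {X : Type*} [MetricSpace X] (μ : X → X → X → X) (D : ℝ) (A : Set X) :
    Prop :=
  ∀ a₁ ∈ A, ∀ a₂ ∈ A, cmInterval μ a₁ a₂ ⊆ closedNbhd D A

/-- A metric space is geodesic if any two points are joined by an isometrically embedded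
compact real interval. -/
def IsGeodesicSpace (X : Type*) [MetricSpace X] : Prop :=
  ∀ x y : X, ∃ γ : ℝ → X, γ 0 = x ∧ γ (dist x y) = y ∧
    ∀ s ∈ Set.Icc (0 : ℝ) (dist x y), ∀ t ∈ Set.Icc (0 : ℝ) (dist x y),
      dist (γ s) (γ t) = |s - t|

/-- An `(L, A)`-quasigeodesic from `x` to `y`, defined on the interval `[a, b]`. -/
def IsQuasigeodesicOn {X : Type*} [MetricSpace X] (L A a b : ℝ) (γ : ℝ → X) (x y : X) :
    Prop :=
  a ≤ b ∧ γ a = x ∧ γ b = y ∧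
    ∀ s ∈ Set.Icc a b, ∀ t ∈ Set.Icc a b,
      |s - t| / L - A ≤ dist (γ s) (γ t) ∧ dist (γ s) (γ t) ≤ L * |s - t| + A

/-- The Gromov product `⟨y,z⟩_x`. -/
noncomputable def gromovProd {X : Type*} [MetricSpace X] (x y z : X) : ℝ :=
  (dist x y + dist x z - dist y z) / 2

/-- `X` is `δ`-hyperbolic (four-point condition on Gromov products). -/
def IsDeltaHyperbolic (X : Type*) [MetricSpace X] (δ : ℝ) : Prop :=
  ∀ w x y z : X, min (gromovProd w x y) (gromovProd w y z) ≤ gromovProd w x z + δ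

/-- `X` is `λ₀`-bushy: from any point there are three directions going arbitrarily far with
pairwise Gromov products at most `λ₀`. -/
def IsBushy (X : Type*) [MetricSpace X] (lam : ℝ) : Prop :=
  ∀ x : X, ∀ r : ℝ, 0 ≤ r → ∃ a b c : X,
    r ≤ dist x a ∧ r ≤ dist x b ∧ r ≤ dist x c ∧
    gromovProd x a b ≤ lam ∧ gromovProd x b c ≤ lam ∧ gromovProd x a c ≤ lam

/-- An `(L, A)`-quasigeodesic line. -/
def IsQuasigeodesicLine {X : Type*} [MetricSpace X] (L A : ℝ) (γ : ℝ → X) : Prop :=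
  ∀ s t : ℝ, |s - t| / L - A ≤ dist (γ s) (γ t) ∧ dist (γ s) (γ t) ≤ L * |s - t| + A

section Aux

variable {X : Type*} [MetricSpace X]

lemma gp_symm (x y z : X) : gromovProd x y z = gromovProd x z y := by
  simp only [gromovProd]; rw [dist_comm y z]; ring

lemma gp_nonneg (x y z : X) : 0 ≤ gromovProd x y z := by
  have := dist_triangle y x z
  simp only [gromovProd]
  rw [dist_comm x y] at *
  linarith

lemma gp_add (x p q : X) :
    gromovProd q p x + gromovProd x p q = dist q x := by
  simp only [gromovProd]
  rw [dist_comm x p, dist_comm x q, dist_comm q p]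
  ring

lemma gp_dist_eq (w p q : X) : dist p q = dist w p + dist w q - 2 * gromovProd w p q := by
  simp only [gromovProd]; ring

lemma gp_self (x y : X) : gromovProd x x y = 0 := by
  simp [gromovProd, dist_comm x y]

/-- Truncation of a far point to a point at distance exactly `R`. -/
lemma exists_trunc {δ R : ℝ} (hR : 0 ≤ R)
    (hgeo : IsGeodesicSpace X) (hhyp : IsDeltaHyperbolic X δ)
    (x w : X) (hw : R ≤ dist x w) :
    ∃ w', dist x w' = R ∧ ∀ q : X, min (gromovProd x q w') R ≤ gromovProd x q w + δ := by
  obtain ⟨γ, h0, h1, hiso⟩ := hgeo x w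
  have hmem : R ∈ Set.Icc (0:ℝ) (dist x w) := ⟨hR, hw⟩
  have hmem0 : (0:ℝ) ∈ Set.Icc (0:ℝ) (dist x w) := ⟨le_refl _, dist_nonneg⟩
  have hmemd : dist x w ∈ Set.Icc (0:ℝ) (dist x w) := ⟨dist_nonneg, le_refl _⟩
  have hd1 : dist x (γ R) = R := by
    rw [← h0, hiso 0 hmem0 R hmem]
    rw [abs_of_nonpos (by linarith)]; ring
  refine ⟨γ R, hd1, ?_⟩
  intro q
  have hd2 : dist (γ R) w = dist x w - R := by
    conv_lhs => rw [← h1]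
    rw [hiso R hmem (dist x w) hmemd, abs_of_nonpos (by linarith)]; ring
  have hgp : gromovProd x (γ R) w = R := by
    simp only [gromovProd]; rw [hd1, hd2]; ring
  have h := hhyp x q (γ R) w
  rw [hgp] at h
  exact h

end Aux

section Aux2

variable {X : Type*} [MetricSpace X]

/-- At most one of two directions with small mutual product can have large product with `p`. -/
lemma sel_pair {δ lam₀ : ℝ} (hhyp : IsDeltaHyperbolic X δ) (x p U V : X)
    (hUV : gromovProd x U V ≤ lam₀) :
    gromovProd x p U ≤ lam₀ + δ ∨ gromovProd x p V ≤ lam₀ + δ := by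
  have h := hhyp x U p V
  rcases le_total (gromovProd x U p) (gromovProd x p V) with hc | hc
  · left; rw [gp_symm]; rw [min_eq_left hc] at h; linarith
  · right; rw [min_eq_right hc] at h; linarith

lemma exists_next {δ lam₀ R : ℝ} (hδ : 0 ≤ δ) (hR0 : 0 ≤ R) (hR : lam₀ + 2*δ < R)
    (hgeo : IsGeodesicSpace X) (hhyp : IsDeltaHyperbolic X δ) (hbushy : IsBushy X lam₀)
    (p x : X) :
    ∃ y : X, dist x y = R ∧ gromovProd x p y ≤ lam₀ + 2*δ := by
  obtain ⟨A, B, C, hA, hB, hC, hAB, hBC, hAC⟩ := hbushy x R hR0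
  have hsel : ∃ W : X, R ≤ dist x W ∧ gromovProd x p W ≤ lam₀ + δ := by
    rcases sel_pair hhyp x p A B hAB with h | h
    · exact ⟨A, hA, h⟩
    · exact ⟨B, hB, h⟩
  obtain ⟨W, hWd, hWp⟩ := hsel
  obtain ⟨w', hd', hmin⟩ := exists_trunc hR0 hgeo hhyp x W hWd
  refine ⟨w', hd', ?_⟩
  have := hmin p
  rcases le_total (gromovProd x p w') R with hc | hc
  · rw [min_eq_left hc] at this; linarith
  · rw [min_eq_right hc] at this; linarith

lemma exists_branch {δ lam₀ R : ℝ} (hδ : 0 ≤ δ) (hR0 : 0 ≤ R) (hR : lam₀ + 2*δ < R)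
    (hgeo : IsGeodesicSpace X) (hhyp : IsDeltaHyperbolic X δ) (hbushy : IsBushy X lam₀)
    (p x : X) :
    ∃ u u' : X, dist x u = R ∧ dist x u' = R ∧ gromovProd x p u ≤ lam₀ + 2*δ ∧
      gromovProd x p u' ≤ lam₀ + 2*δ ∧ gromovProd x u u' ≤ lam₀ + 2*δ := by
  obtain ⟨A, B, C, hA, hB, hC, hAB, hBC, hAC⟩ := hbushy x R hR0
  have hsel : ∃ U V : X, R ≤ dist x U ∧ R ≤ dist x V ∧ gromovProd x p U ≤ lam₀ + δ ∧
      gromovProd x p V ≤ lam₀ + δ ∧ gromovProd x U V ≤ lam₀ := by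
    by_cases hpA : gromovProd x p A ≤ lam₀ + δ
    · by_cases hpB : gromovProd x p B ≤ lam₀ + δ
      · exact ⟨A, B, hA, hB, hpA, hpB, hAB⟩
      · rcases sel_pair hhyp x p B C hBC with h | h
        · exact absurd h hpB
        · exact ⟨A, C, hA, hC, hpA, h, hAC⟩
    · rcases sel_pair hhyp x p A B hAB with h | h
      · exact absurd h hpA
      · rcases sel_pair hhyp x p A C hAC with h2 | h2
        · exact absurd h2 hpA
        · exact ⟨B, C, hB, hC, h, h2, hBC⟩
  obtain ⟨U, V, hU, hV, hpU, hpV, hUV⟩ := hsel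
  obtain ⟨u, hud, hminU⟩ := exists_trunc hR0 hgeo hhyp x U hU
  obtain ⟨v, hvd, hminV⟩ := exists_trunc hR0 hgeo hhyp x V hV
  have hpu : gromovProd x p u ≤ lam₀ + 2*δ := by
    have := hminU p
    rcases le_total (gromovProd x p u) R with hc | hc
    · rw [min_eq_left hc] at this; linarith
    · rw [min_eq_right hc] at this; linarith
  have hpv : gromovProd x p v ≤ lam₀ + 2*δ := by
    have := hminV p
    rcases le_total (gromovProd x p v) R with hc | hc
    · rw [min_eq_left hc] at this; linarith
    · rw [min_eq_right hc] at this; linarith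
  have huV : gromovProd x u V ≤ lam₀ + δ := by
    have := hminU V
    rw [gp_symm x V U] at this
    rcases le_total (gromovProd x V u) R with hc | hc
    · rw [min_eq_left hc] at this; rw [gp_symm]; linarith
    · rw [min_eq_right hc] at this; linarith
  have huv : gromovProd x u v ≤ lam₀ + 2*δ := by
    have := hminV u
    rcases le_total (gromovProd x u v) R with hc | hc
    · rw [min_eq_left hc] at this; linarith
    · rw [min_eq_right hc] at this; linarith
  exact ⟨u, v, hud, hvd, hpu, hpv, huv⟩

/-- Iterated extension: an infinite chain seeded by two points. -/
lemma tail_exists {R k : ℝ} (nxt : X → X → X)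
    (hd : ∀ p x, dist x (nxt p x) = R)
    (hp : ∀ p x, gromovProd x p (nxt p x) ≤ k) (s0 s1 : X) (h01 : dist s0 s1 = R) :
    ∃ t : ℕ → X, t 0 = s0 ∧ t 1 = s1 ∧ (∀ n, dist (t n) (t (n+1)) = R) ∧
      ∀ n, gromovProd (t (n+1)) (t n) (t (n+2)) ≤ k := by
  classical
  let step : X × X → X × X := fun c => (c.2, nxt c.1 c.2)
  let t : ℕ → X := fun n => (step^[n] (s0, s1)).1
  have hit : ∀ n, step^[n+1] (s0, s1) = step (step^[n] (s0, s1)) := by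
    intro n; rw [Function.iterate_succ_apply']
  have hsucc : ∀ n, t (n+1) = (step^[n] (s0, s1)).2 := by
    intro n; show (step^[n+1] (s0, s1)).1 = _; rw [hit n]
  have hsucc2 : ∀ n, t (n+2) = nxt (step^[n] (s0, s1)).1 (step^[n] (s0, s1)).2 := by
    intro n
    have : t (n+2) = (step^[n+1] (s0, s1)).2 := hsucc (n+1)
    rw [this, hit n]
  refine ⟨t, rfl, hsucc 0, ?_, ?_⟩
  · intro n
    cases n with
    | zero => exact h01
    | succ m =>
      show dist (t (m+1)) (t (m+2)) = R
      rw [hsucc2 m, hsucc m]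
      exact hd _ _
  · intro n
    rw [hsucc n, hsucc2 n]
    exact hp _ _

end Aux2

section Chain

variable {X : Type*} [MetricSpace X] {δ k R : ℝ} {g : ℤ → X}

/-- Key invariant of chains: Gromov product of the start with the next point, based at the
current point, stays small. -/
lemma chain_C1 (hδ : 0 ≤ δ) (hk : 0 ≤ k) (hR : 2*k + 3*δ + 1 ≤ R)
    (hhyp : IsDeltaHyperbolic X δ)
    (hd : ∀ i, dist (g i) (g (i+1)) = R)
    (hp : ∀ i, gromovProd (g i) (g (i-1)) (g (i+1)) ≤ k) :
    ∀ i j : ℤ, i ≤ j → gromovProd (g j) (g i) (g (j+1)) ≤ k + δ := by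
  intro i
  refine Int.le_induction ?_ ?_
  · rw [gp_self]; linarith
  · intro j hij ih
    have hid : gromovProd (g j) (g i) (g (j+1)) + gromovProd (g (j+1)) (g i) (g j)
        = dist (g j) (g (j+1)) := gp_add (g (j+1)) (g i) (g j)
    rw [hd j] at hid
    have h2 : R - (k + δ) ≤ gromovProd (g (j+1)) (g i) (g j) := by linarith
    have h3 := hhyp (g (j+1)) (g (j+1+1)) (g i) (g j)
    have h4 : gromovProd (g (j+1)) (g (j+1+1)) (g j) ≤ k := by
      have := hp (j+1)
      have e : j + 1 - 1 = j := by ring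
      rw [e] at this
      rw [gp_symm]; exact this
    rcases le_total (gromovProd (g (j+1)) (g (j+1+1)) (g i))
        (gromovProd (g (j+1)) (g i) (g j)) with hc | hc
    · rw [min_eq_left hc] at h3; rw [gp_symm]; linarith
    · rw [min_eq_right hc] at h3; linarith

/-- Reversed form of the chain invariant. -/
lemma chain_C1' (hδ : 0 ≤ δ) (hk : 0 ≤ k) (hR : 2*k + 3*δ + 1 ≤ R)
    (hhyp : IsDeltaHyperbolic X δ)
    (hd : ∀ i, dist (g i) (g (i+1)) = R)
    (hp : ∀ i, gromovProd (g i) (g (i-1)) (g (i+1)) ≤ k) :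
    ∀ i j : ℤ, j ≤ i → gromovProd (g j) (g i) (g (j-1)) ≤ k + δ := by
  intro i j hij
  have hd2 : ∀ i : ℤ, dist (g (-i)) (g (-i+1)) = R := fun i => hd (-i)
  set g2 : ℤ → X := fun t => g (-t) with hg2
  have hd' : ∀ i : ℤ, dist (g2 i) (g2 (i+1)) = R := by
    intro i
    have := hd (-(i+1))
    have e : -(i+1) + 1 = -i := by ring
    rw [e] at this
    rw [dist_comm] at this
    simpa [hg2] using this
  have hp' : ∀ i : ℤ, gromovProd (g2 i) (g2 (i-1)) (g2 (i+1)) ≤ k := by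
    intro i
    have := hp (-i)
    rw [gp_symm] at this
    have e1 : -i - 1 = -(i+1) := by ring
    have e2 : -i + 1 = -(i-1) := by ring
    rw [e1, e2] at this
    simpa [hg2] using this
  have := chain_C1 hδ hk hR hhyp hd' hp' (-i) (-j) (by omega)
  have e3 : -j + 1 = -(j-1) := by ring
  rw [e3] at this
  simpa [hg2] using this

lemma chain_C2 (hδ : 0 ≤ δ) (hk : 0 ≤ k) (hR : 2*k + 3*δ + 1 ≤ R)
    (hhyp : IsDeltaHyperbolic X δ)
    (hd : ∀ i, dist (g i) (g (i+1)) = R)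
    (hp : ∀ i, gromovProd (g i) (g (i-1)) (g (i+1)) ≤ k) :
    ∀ i j : ℤ, i ≤ j → R - (k + δ) ≤ gromovProd (g (j+1)) (g i) (g j) := by
  intro i j hij
  have hid : gromovProd (g j) (g i) (g (j+1)) + gromovProd (g (j+1)) (g i) (g j)
      = dist (g j) (g (j+1)) := gp_add (g (j+1)) (g i) (g j)
  rw [hd j] at hid
  have := chain_C1 hδ hk hR hhyp hd hp i j hij
  linarith

lemma chain_C2' (hδ : 0 ≤ δ) (hk : 0 ≤ k) (hR : 2*k + 3*δ + 1 ≤ R)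
    (hhyp : IsDeltaHyperbolic X δ)
    (hd : ∀ i, dist (g i) (g (i+1)) = R)
    (hp : ∀ i, gromovProd (g i) (g (i-1)) (g (i+1)) ≤ k) :
    ∀ i j : ℤ, j ≤ i → R - (k + δ) ≤ gromovProd (g (j-1)) (g i) (g j) := by
  intro i j hij
  have hid : gromovProd (g j) (g i) (g (j-1)) + gromovProd (g (j-1)) (g i) (g j)
      = dist (g j) (g (j-1)) := gp_add (g (j-1)) (g i) (g j)
  have hdd : dist (g j) (g (j-1)) = R := by
    have := hd (j-1)
    have e : j - 1 + 1 = j := by ring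
    rw [e] at this
    rw [dist_comm]; exact this
  rw [hdd] at hid
  have := chain_C1' hδ hk hR hhyp hd hp i j hij
  linarith

lemma chain_lower (hδ : 0 ≤ δ) (hk : 0 ≤ k) (hR : 2*k + 3*δ + 1 ≤ R)
    (hhyp : IsDeltaHyperbolic X δ)
    (hd : ∀ i, dist (g i) (g (i+1)) = R)
    (hp : ∀ i, gromovProd (g i) (g (i-1)) (g (i+1)) ≤ k) :
    ∀ i j : ℤ, i ≤ j → ((j : ℝ) - (i : ℝ)) * (δ + 1) ≤ dist (g i) (g j) := by
  intro i
  refine Int.le_induction ?_ ?_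
  · have e : ((i:ℝ) - (i:ℝ)) * (δ + 1) = 0 := by ring
    rw [e]
    exact dist_nonneg
  · intro j hij ih
    have hgp := chain_C1 hδ hk hR hhyp hd hp i j hij
    have hde : dist (g i) (g (j+1)) =
        dist (g j) (g i) + dist (g j) (g (j+1)) - 2 * gromovProd (g j) (g i) (g (j+1)) :=
      gp_dist_eq (g j) (g i) (g (j+1))
    rw [hd j, dist_comm (g j) (g i)] at hde
    push_cast
    push_cast at ih
    nlinarith [@dist_nonneg _ _ (g i) (g j)]

lemma chain_upper (hd : ∀ i, dist (g i) (g (i+1)) = R) :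
    ∀ i j : ℤ, i ≤ j → dist (g i) (g j) ≤ ((j : ℝ) - (i : ℝ)) * R := by
  intro i
  refine Int.le_induction ?_ ?_
  · have e : ((i:ℝ) - (i:ℝ)) * R = 0 := by ring
    rw [e, dist_self]
  · intro j hij ih
    have := dist_triangle (g i) (g j) (g (j+1))
    rw [hd j] at this
    push_cast
    push_cast at ih
    nlinarith

lemma chain_lower_abs (hδ : 0 ≤ δ) (hk : 0 ≤ k) (hR : 2*k + 3*δ + 1 ≤ R)
    (hhyp : IsDeltaHyperbolic X δ)
    (hd : ∀ i, dist (g i) (g (i+1)) = R)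
    (hp : ∀ i, gromovProd (g i) (g (i-1)) (g (i+1)) ≤ k) :
    ∀ i j : ℤ, |(i : ℝ) - (j : ℝ)| ≤ dist (g i) (g j) := by
  intro i j
  rcases le_total i j with hij | hij
  · have := chain_lower hδ hk hR hhyp hd hp i j hij
    have hcast : (i : ℝ) ≤ (j : ℝ) := by exact_mod_cast hij
    rw [abs_of_nonpos (by linarith)]
    nlinarith
  · have := chain_lower hδ hk hR hhyp hd hp j i hij
    have hcast : (j : ℝ) ≤ (i : ℝ) := by exact_mod_cast hij
    rw [abs_of_nonneg (by linarith), dist_comm]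
    nlinarith

lemma chain_upper_abs (hR0 : 0 ≤ R) (hd : ∀ i, dist (g i) (g (i+1)) = R) :
    ∀ i j : ℤ, dist (g i) (g j) ≤ |(i : ℝ) - (j : ℝ)| * R := by
  intro i j
  rcases le_total i j with hij | hij
  · have := chain_upper hd i j hij
    have hcast : (i : ℝ) ≤ (j : ℝ) := by exact_mod_cast hij
    rw [abs_of_nonpos (by linarith)]
    nlinarith
  · have := chain_upper hd j i hij
    have hcast : (j : ℝ) ≤ (i : ℝ) := by exact_mod_cast hij
    rw [abs_of_nonneg (by linarith), dist_comm]
    nlinarith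

end Chain

section DivCenter

variable {X : Type*} [MetricSpace X]

/-- Divergence lemma: two points each "behind" one of two diverging directions have small
Gromov product. -/
lemma div_lemma {δ k M : ℝ} (hδ : 0 ≤ δ) (hhyp : IsDeltaHyperbolic X δ)
    (hM : k + 2*δ < M) {w p q m n : X}
    (hpm : M ≤ gromovProd w p m) (hqn : M ≤ gromovProd w q n)
    (hmn : gromovProd w m n ≤ k) : gromovProd w p q ≤ k + 2*δ := by
  have h1 : gromovProd w n p ≤ k + δ := by
    have h := hhyp w n p m
    rcases le_total (gromovProd w n p) (gromovProd w p m) with hc | hc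
    · rw [min_eq_left hc] at h; rw [gp_symm w m n] at hmn; linarith
    · rw [min_eq_right hc] at h; rw [gp_symm w m n] at hmn; linarith
  have h2 := hhyp w p q n
  rcases le_total (gromovProd w p q) (gromovProd w q n) with hc | hc
  · rw [min_eq_left hc] at h2; rw [gp_symm w n p] at h1; linarith
  · rw [min_eq_right hc] at h2; rw [gp_symm w n p] at h1; linarith

/-- Center lemma: a point close to two points with small Gromov product at `w` is close
to `w`. -/
lemma center_lemma {δ c D : ℝ} (hhyp : IsDeltaHyperbolic X δ)
    {x w p q : X} (hc : gromovProd w p q ≤ c)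
    (hp : dist x p ≤ D) (hq : dist x q ≤ D) : dist x w ≤ D + 2*c + 2*δ := by
  have h := hhyp x p w q
  simp only [gromovProd] at h hc
  have e1 : dist p w = dist w p := dist_comm p w
  rcases le_total ((dist x p + dist x w - dist p w)/2) ((dist x w + dist x q - dist w q)/2)
      with hcase | hcase
  · rw [min_eq_left hcase] at h
    linarith [@dist_nonneg _ _ w q]
  · rw [min_eq_right hcase] at h
    linarith [@dist_nonneg _ _ w p]

end DivCenter

lemma floor_diff_bounds (s t : ℝ) :
    |(⌊s⌋:ℝ) - (⌊t⌋:ℝ)| ≤ |s - t| + 1 ∧ |s - t| ≤ |(⌊s⌋:ℝ) - (⌊t⌋:ℝ)| + 1 := by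
  have hs1 : (⌊s⌋:ℝ) ≤ s := Int.floor_le s
  have hs2 : s < (⌊s⌋:ℝ) + 1 := Int.lt_floor_add_one s
  have ht1 : (⌊t⌋:ℝ) ≤ t := Int.floor_le t
  have ht2 : t < (⌊t⌋:ℝ) + 1 := Int.lt_floor_add_one t
  rcases abs_cases (s - t) with ⟨h1, h2⟩ | ⟨h1, h2⟩ <;>
    rcases abs_cases ((⌊s⌋:ℝ) - (⌊t⌋:ℝ)) with ⟨h3, h4⟩ | ⟨h3, h4⟩ <;>
    constructor <;> linarith


set_option maxHeartbeats 1000000 in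
/-- The claim used in the proof of Corollary 4.6: in a bushy hyperbolic space, every geodesic
segment is uniformly close to two quasigeodesic lines whose common coarse intersection is the
segment itself. -/
theorem segment_between_two_lines :
    ∀ δ lam₀ : ℝ, 0 ≤ δ → 0 ≤ lam₀ → ∃ lam : ℝ, 1 ≤ lam ∧
      ∀ (X : Type u) [MetricSpace X],
        IsGeodesicSpace X → IsDeltaHyperbolic X δ → IsBushy X lam₀ →
          ∀ (a b : ℝ) (σ : ℝ → X), a ≤ b →
            (∀ s ∈ Set.Icc a b, ∀ t ∈ Set.Icc a b, dist (σ s) (σ t) = |s - t|) →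
            ∃ γ γ' : ℝ → X, IsQuasigeodesicLine lam lam γ ∧ IsQuasigeodesicLine lam lam γ' ∧
              σ '' Set.Icc a b ⊆
                closedNbhd lam (Set.range γ) ∩ closedNbhd lam (Set.range γ') ∧
              ∀ D : ℝ, 0 ≤ D → ∀ x : X,
                Metric.infDist x (Set.range γ) ≤ D → Metric.infDist x (Set.range γ') ≤ D →
                  Metric.infDist x (σ '' Set.Icc a b) ≤ D + lam := by
  intro δ lam₀ hδ hlam₀
  set k := lam₀ + 2*δ with hkdef
  set R := 2*k + 3*δ + 1 with hRdef
  set lam := R + 2*k + 6*δ + 1 with hlamdef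
  have hk : 0 ≤ k := by rw [hkdef]; linarith
  have hR0 : 0 ≤ R := by rw [hRdef]; linarith
  have hR1 : 1 ≤ R := by rw [hRdef]; linarith
  have hRk : lam₀ + 2*δ < R := by rw [hRdef, hkdef]; linarith
  have hlam1 : 1 ≤ lam := by rw [hlamdef]; linarith
  have hRlam : R + 1 ≤ lam := by rw [hlamdef]; linarith
  clear_value lam R k
  refine ⟨lam, hlam1, ?_⟩
  intro X _inst hgeo hhyp hbushy a b σ hab hσ
  have hRpos : 0 < R := by linarith
  -- the next-point choice function
  choose nxt hnxtd hnxtp using fun p x => exists_next hδ hR0 hRk hgeo hhyp hbushy p x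
  have hnxtp' : ∀ p x : X, gromovProd x p (nxt p x) ≤ k := by
    intro p x; rw [hkdef]; exact hnxtp p x
  -- sample spacing
  set N : ℤ := ⌊(b - a)/R⌋ with hNdef
  have hN0 : 0 ≤ N := Int.floor_nonneg.mpr (div_nonneg (by linarith) hR0)
  have hNle : a + N*R ≤ b := by
    have h1 : (N:ℝ) ≤ (b - a)/R := Int.floor_le _
    have := (le_div_iff₀ hRpos).mp h1
    linarith
  have hNlt : b - a < ((N:ℝ)+1)*R := by
    have h1 : (b - a)/R < (N:ℝ) + 1 := Int.lt_floor_add_one _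
    have := (div_lt_iff₀ hRpos).mp h1
    linarith
  clear_value N
  have hmem : ∀ i : ℤ, 0 ≤ i → i ≤ N → a + i*R ∈ Set.Icc a b := by
    intro i h0 h1
    constructor
    · nlinarith [(by exact_mod_cast h0 : (0:ℝ) ≤ (i:ℝ))]
    · have : (i:ℝ) ≤ (N:ℝ) := by exact_mod_cast h1
      nlinarith
  have hmidd : ∀ i j : ℤ, 0 ≤ i → i ≤ N → 0 ≤ j → j ≤ N →
      dist (σ (a + i*R)) (σ (a + j*R)) = |(i:ℝ) - (j:ℝ)| * R := by
    intro i j hi0 hi1 hj0 hj1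
    rw [hσ _ (hmem i hi0 hi1) _ (hmem j hj0 hj1)]
    rw [show a + i*R - (a + j*R) = ((i:ℝ) - j) * R by ring, abs_mul, abs_of_nonneg hR0]
  -- endpoints of the shared part: y beyond σ(a+NR), z beyond σ(a)
  obtain ⟨y, z, hyd, hzd, hyz⟩ :
      ∃ y z : X, dist (σ (a + N*R)) y = R ∧ dist (σ a) z = R ∧
        ((N = 0 ∧ gromovProd (σ a) z y ≤ k) ∨
         (1 ≤ N ∧ gromovProd (σ (a + N*R)) (σ (a + (N-1)*R)) y ≤ k ∧
           gromovProd (σ a) (σ (a + 1*R)) z ≤ k)) := by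
    by_cases hN : N = 0
    · obtain ⟨yy, zz, h1, h2, _, _, h5⟩ :=
        exists_branch hδ hR0 hRk hgeo hhyp hbushy (σ a) (σ a)
      refine ⟨yy, zz, ?_, ?_, Or.inl ⟨hN, ?_⟩⟩
      · rw [hN]; push_cast; rw [show a + 0*R = a by ring]; exact h1
      · exact h2
      · rw [hkdef, gp_symm]; exact h5
    · have hN1 : 1 ≤ N := by omega
      refine ⟨nxt (σ (a + (N-1)*R)) (σ (a + N*R)), nxt (σ (a + 1*R)) (σ a),
        hnxtd _ _, hnxtd _ _, Or.inr ⟨hN1, hnxtp' _ _, hnxtp' _ _⟩⟩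
  -- branch points beyond y and z
  obtain ⟨u, u', hud, hud', hyu, hyu', huu'⟩ :=
    exists_branch hδ hR0 hRk hgeo hhyp hbushy (σ (a + N*R)) y
  obtain ⟨v, v', hvd, hvd', hzv, hzv', hvv'⟩ :=
    exists_branch hδ hR0 hRk hgeo hhyp hbushy (σ a) z
  rw [← hkdef] at hyu hyu' huu' hzv hzv' hvv'
  -- tails
  obtain ⟨ty, hty0, hty1, htyd, htyp⟩ := tail_exists nxt hnxtd hnxtp' y u hud
  obtain ⟨ty', hty0', hty1', htyd', htyp'⟩ := tail_exists nxt hnxtd hnxtp' y u' hud'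
  obtain ⟨tz, htz0, htz1, htzd, htzp⟩ := tail_exists nxt hnxtd hnxtp' z v hvd
  obtain ⟨tz', htz0', htz1', htzd', htzp'⟩ := tail_exists nxt hnxtd hnxtp' z v' hvd'
  -- assembled chains
  set mk : (ℕ → X) → (ℕ → X) → ℤ → X := fun tt tb i =>
    if i < 0 then tb (-i - 1).toNat else if i ≤ N then σ (a + i*R)
    else tt (i - N - 1).toNat with hmkdef
  have hmk_neg : ∀ tt tb (n : ℕ), mk tt tb (-1 - (n:ℤ)) = tb n := by
    intro tt tb n
    rw [hmkdef]
    simp only [if_pos (by omega : -1 - (n:ℤ) < 0)]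
    congr 1
    omega
  have hmk_mid : ∀ tt tb (i : ℤ), 0 ≤ i → i ≤ N → mk tt tb i = σ (a + i*R) := by
    intro tt tb i h0 h1
    rw [hmkdef]
    simp only [if_neg (by omega : ¬ i < 0), if_pos h1]
  have hmk_pos : ∀ tt tb (n : ℕ), mk tt tb (N + 1 + (n:ℤ)) = tt n := by
    intro tt tb n
    rw [hmkdef]
    simp only [if_neg (by omega : ¬ N + 1 + (n:ℤ) < 0), if_neg (by omega : ¬ N + 1 + (n:ℤ) ≤ N)]
    congr 1
    omega
  clear_value mk
  have hassem : ∀ tt tb : ℕ → X, tt 0 = y → tb 0 = z →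
      (∀ n, dist (tt n) (tt (n+1)) = R) →
      (∀ n, gromovProd (tt (n+1)) (tt n) (tt (n+2)) ≤ k) →
      (∀ n, dist (tb n) (tb (n+1)) = R) →
      (∀ n, gromovProd (tb (n+1)) (tb n) (tb (n+2)) ≤ k) →
      gromovProd y (σ (a + N*R)) (tt 1) ≤ k →
      gromovProd z (σ a) (tb 1) ≤ k →
      (∀ i, dist (mk tt tb i) (mk tt tb (i+1)) = R) ∧
      (∀ i, gromovProd (mk tt tb i) (mk tt tb (i-1)) (mk tt tb (i+1)) ≤ k) := by
    intro tt tb ht0 hb0 htd htp hbd hbp hty hbz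
    have ENeg : ∀ (j : ℤ) (n : ℕ), j = -1 - (n:ℤ) → mk tt tb j = tb n := by
      intro j n hj; rw [hj]; exact hmk_neg tt tb n
    have EMid : ∀ j : ℤ, 0 ≤ j → j ≤ N → mk tt tb j = σ (a + j*R) := hmk_mid tt tb
    have EPos : ∀ (j : ℤ) (n : ℕ), j = N + 1 + (n:ℤ) → mk tt tb j = tt n := by
      intro j n hj; rw [hj]; exact hmk_pos tt tb n
    constructor
    · intro i
      by_cases h1 : i ≤ -2
      · obtain ⟨m, hm⟩ : ∃ m : ℕ, i = -2 - (m:ℤ) := ⟨(-2 - i).toNat, by omega⟩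
        rw [ENeg i (m+1) (by omega), ENeg (i+1) m (by omega)]
        rw [dist_comm]; exact hbd m
      by_cases h2 : i = -1
      · rw [show i + 1 = 0 from by omega, ENeg i 0 (by omega),
          EMid 0 le_rfl hN0, hb0]
        rw [show ((0:ℤ):ℝ) = 0 from by norm_num, dist_comm]
        rw [show a + 0 * R = a from by ring]
        exact hzd
      have h0i : 0 ≤ i := by omega
      by_cases h3 : i ≤ N - 1
      · rw [EMid i h0i (by omega), EMid (i+1) (by omega) (by omega)]
        rw [hmidd i (i+1) h0i (by omega) (by omega) (by omega)]
        push_cast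
        rw [show (i:ℝ) - ((i:ℝ)+1) = -1 from by ring, abs_neg, abs_one, one_mul]
      by_cases h4 : i = N
      · rw [show i + 1 = N + 1 from by omega, EPos (N+1) 0 (by omega),
          EMid i h0i (by omega), ht0, h4]
        exact hyd
      · obtain ⟨m, hm⟩ : ∃ m : ℕ, i = N + 1 + (m:ℤ) := ⟨(i - N - 1).toNat, by omega⟩
        rw [EPos i m hm, EPos (i+1) (m+1) (by omega)]
        exact htd m
    · intro i
      by_cases h1 : i ≤ -2
      · obtain ⟨m, hm⟩ : ∃ m : ℕ, i = -2 - (m:ℤ) := ⟨(-2 - i).toNat, by omega⟩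
        rw [ENeg i (m+1) (by omega), ENeg (i+1) m (by omega), ENeg (i-1) (m+2) (by omega)]
        rw [gp_symm]; exact hbp m
      by_cases h2 : i = -1
      · rw [show i + 1 = 0 from by omega, ENeg i 0 (by omega), ENeg (i-1) 1 (by omega),
          EMid 0 le_rfl hN0, hb0]
        rw [show ((0:ℤ):ℝ) = 0 from by norm_num, show a + 0 * R = a from by ring, gp_symm]
        exact hbz
      have h0i : 0 ≤ i := by omega
      by_cases h3 : i = 0
      · subst h3
        rcases hyz with ⟨hN, hzy⟩ | ⟨hN, hNy, hNz⟩
        · rw [show (0:ℤ) - 1 = -1 from by ring, show (0:ℤ) + 1 = N + 1 from by omega,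
            ENeg (-1) 0 (by omega), EPos (N+1) 0 (by omega), EMid 0 le_rfl hN0, hb0, ht0]
          rw [show ((0:ℤ):ℝ) = 0 from by norm_num, show a + 0 * R = a from by ring]
          exact hzy
        · rw [show (0:ℤ) - 1 = -1 from by ring, ENeg (-1) 0 (by omega),
            EMid 0 le_rfl hN0, EMid (0+1) (by omega) (by omega), hb0]
          rw [show ((0:ℤ):ℝ) = 0 from by norm_num, show a + 0 * R = a from by ring]
          rw [show (((0:ℤ)+1:ℤ):ℝ) = 1 from by norm_num, gp_symm]
          exact hNz
      have h1i : 1 ≤ i := by omega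
      by_cases h4 : i ≤ N - 1
      · rw [EMid i h0i (by omega), EMid (i-1) (by omega) (by omega),
          EMid (i+1) (by omega) (by omega)]
        have e1 := hmidd i (i-1) h0i (by omega) (by omega) (by omega)
        have e2 := hmidd i (i+1) h0i (by omega) (by omega) (by omega)
        have e3 := hmidd (i-1) (i+1) (by omega) (by omega) (by omega) (by omega)
        push_cast at e1 e2 e3 ⊢
        rw [show (i:ℝ) - ((i:ℝ)-1) = 1 from by ring, abs_one, one_mul] at e1
        rw [show (i:ℝ) - ((i:ℝ)+1) = -1 from by ring, abs_neg, abs_one, one_mul] at e2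
        rw [show (i:ℝ)-1 - ((i:ℝ)+1) = -2 from by ring, abs_neg,
          abs_of_nonneg (by norm_num : (0:ℝ) ≤ 2)] at e3
        simp only [gromovProd]
        rw [e1, e2, e3]
        linarith
      by_cases h5 : i = N
      · have hN1 : 1 ≤ N := by omega
        rcases hyz with ⟨hN, _⟩ | ⟨_, hNy, _⟩
        · omega
        · subst h5
          rw [show i + 1 = i + 1 from rfl, EPos (i+1) 0 (by omega),
            EMid i h0i le_rfl, EMid (i-1) (by omega) (by omega), ht0]
          push_cast
          exact hNy
      by_cases h6 : i = N + 1
      · rw [show i - 1 = N from by omega, show i + 1 = N + 1 + ((1:ℕ):ℤ) from by omega,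
          EPos i 0 (by omega), EPos (N + 1 + ((1:ℕ):ℤ)) 1 rfl,
          EMid N hN0 le_rfl, ht0]
        exact hty
      · obtain ⟨m, hm⟩ : ∃ m : ℕ, i = N + 2 + (m:ℤ) := ⟨(i - N - 2).toNat, by omega⟩
        rw [EPos i (m+1) (by omega), EPos (i-1) m (by omega), EPos (i+1) (m+2) (by omega)]
        exact htp m
  obtain ⟨hdg, hpg⟩ := hassem ty tz hty0 htz0 htyd htyp htzd htzp
    (by rw [hty1]; exact hyu) (by rw [htz1]; exact hzv)
  obtain ⟨hdg', hpg'⟩ := hassem ty' tz' hty0' htz0' htyd' htyp' htzd' htzp'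
    (by rw [hty1']; exact hyu') (by rw [htz1']; exact hzv')
  set g : ℤ → X := mk ty tz with hgdef
  set g' : ℤ → X := mk ty' tz' with hgdef'
  have hRchain : 2*k + 3*δ + 1 ≤ R := le_of_eq hRdef.symm
  -- the two lines
  have hqg : ∀ h : ℤ → X, (∀ i, dist (h i) (h (i+1)) = R) →
      (∀ i, gromovProd (h i) (h (i-1)) (h (i+1)) ≤ k) →
      IsQuasigeodesicLine lam lam (fun t : ℝ => h ⌊t⌋) := by
    intro h hd hp s t
    obtain ⟨hfb1, hfb2⟩ := floor_diff_bounds s t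
    have hlow := chain_lower_abs hδ hk hRchain hhyp hd hp ⌊s⌋ ⌊t⌋
    have hup := chain_upper_abs hR0 hd ⌊s⌋ ⌊t⌋
    constructor
    · have h1 : |s - t| / lam ≤ |s - t| :=
        div_le_self (abs_nonneg _) hlam1
      simp only
      linarith
    · have h2 : |(⌊s⌋:ℝ) - (⌊t⌋:ℝ)| * R ≤ (|s - t| + 1) * R := by
        nlinarith
      have h3 : (|s - t| + 1) * R ≤ lam * |s - t| + lam := by
        nlinarith [abs_nonneg (s - t)]
      simp only
      linarith
  -- point equations for g and g'
  have Eg_neg : ∀ n : ℕ, g (-1 - (n:ℤ)) = tz n := fun n => hmk_neg ty tz n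
  have Eg_mid : ∀ i : ℤ, 0 ≤ i → i ≤ N → g i = σ (a + i*R) := fun i h0 h1 =>
    hmk_mid ty tz i h0 h1
  have Eg_pos : ∀ n : ℕ, g (N + 1 + (n:ℤ)) = ty n := fun n => hmk_pos ty tz n
  have Eg'_neg : ∀ n : ℕ, g' (-1 - (n:ℤ)) = tz' n := fun n => hmk_neg ty' tz' n
  have Eg'_mid : ∀ i : ℤ, 0 ≤ i → i ≤ N → g' i = σ (a + i*R) := fun i h0 h1 =>
    hmk_mid ty' tz' i h0 h1
  have Eg'_pos : ∀ n : ℕ, g' (N + 1 + (n:ℤ)) = ty' n := fun n => hmk_pos ty' tz' n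
  have hshare : ∀ i : ℤ, -1 ≤ i → i ≤ N + 1 → g i = g' i := by
    intro i hi1 hi2
    by_cases hneg : i = -1
    · rw [show i = -1 - ((0:ℕ):ℤ) from by omega, Eg_neg 0, Eg'_neg 0, htz0, htz0']
    by_cases hpos : i = N + 1
    · rw [show i = N + 1 + ((0:ℕ):ℤ) from by omega, Eg_pos 0, Eg'_pos 0, hty0, hty0']
    · rw [Eg_mid i (by omega) (by omega), Eg'_mid i (by omega) (by omega)]
  have hαmem : ∀ i : ℤ, 0 ≤ i → i ≤ N → σ (a + i*R) ∈ σ '' Set.Icc a b :=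
    fun i h0 h1 => ⟨_, hmem i h0 h1, rfl⟩
  have hamem : σ a ∈ σ '' Set.Icc a b := ⟨a, ⟨le_refl a, hab⟩, rfl⟩
  have hz0 : g (-1) = z := by
    rw [show (-1:ℤ) = -1 - ((0:ℕ):ℤ) from by omega, Eg_neg 0, htz0]
  have hy0 : g (N+1) = y := by
    rw [show N+1 = N + 1 + ((0:ℕ):ℤ) from by omega, Eg_pos 0, hty0]
  refine ⟨fun t : ℝ => g ⌊t⌋, fun t : ℝ => g' ⌊t⌋, hqg g hdg hpg, hqg g' hdg' hpg', ?_, ?_⟩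
  · -- the segment is in the λ-neighbourhood of both lines
    rintro w ⟨t, ht, rfl⟩
    have hta : 0 ≤ t - a := by linarith [ht.1]
    set i : ℤ := ⌊(t - a)/R⌋ with hidef
    have hi0 : 0 ≤ i := Int.floor_nonneg.mpr (div_nonneg hta hR0)
    have hiN : i ≤ N := by
      rw [hNdef, hidef]
      exact Int.floor_le_floor ((div_le_div_iff_of_pos_right hRpos).mpr (by linarith [ht.2]))
    clear_value i
    have hfl : (i:ℝ) ≤ (t - a)/R := by rw [hidef]; exact Int.floor_le _
    have hfl2 : (t - a)/R < (i:ℝ) + 1 := by rw [hidef]; exact Int.lt_floor_add_one _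
    have hiR1 : (i:ℝ)*R ≤ t - a := by
      have := mul_le_mul_of_nonneg_right hfl (le_of_lt hRpos)
      rw [div_mul_cancel₀ _ (ne_of_gt hRpos)] at this
      linarith
    have hiR2 : t - a < ((i:ℝ) + 1)*R := by
      have := mul_lt_mul_of_pos_right hfl2 hRpos
      rw [div_mul_cancel₀ _ (ne_of_gt hRpos)] at this
      linarith
    have hdist : dist (σ t) (σ (a + i*R)) ≤ R := by
      rw [hσ t ht _ (hmem i hi0 hiN)]
      rw [abs_le]
      constructor <;> nlinarith
    constructor
    · show Metric.infDist (σ t) _ ≤ lam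
      have hmemr : g i ∈ Set.range (fun t : ℝ => g ⌊t⌋) := by
        refine ⟨(i:ℝ), ?_⟩
        simp [Int.floor_intCast]
      refine le_trans (Metric.infDist_le_dist_of_mem hmemr) ?_
      rw [Eg_mid i hi0 hiN]
      linarith
    · show Metric.infDist (σ t) _ ≤ lam
      have hmemr : g' i ∈ Set.range (fun t : ℝ => g' ⌊t⌋) := by
        refine ⟨(i:ℝ), ?_⟩
        simp [Int.floor_intCast]
      refine le_trans (Metric.infDist_le_dist_of_mem hmemr) ?_
      rw [Eg'_mid i hi0 hiN]
      linarith
  · -- coarse intersection of the two lines is the segment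
    intro D hD x hxg hxg'
    have hne : (Set.range fun t : ℝ => g ⌊t⌋).Nonempty := ⟨_, Set.mem_range_self 0⟩
    have hne' : (Set.range fun t : ℝ => g' ⌊t⌋).Nonempty := ⟨_, Set.mem_range_self 0⟩
    obtain ⟨p, hpmem, hpd⟩ := (Metric.infDist_lt_iff hne).mp
      (lt_of_le_of_lt hxg (by linarith : D < D + 1))
    obtain ⟨q, hqmem, hqd⟩ := (Metric.infDist_lt_iff hne').mp
      (lt_of_le_of_lt hxg' (by linarith : D < D + 1))
    obtain ⟨s, hs⟩ := hpmem
    obtain ⟨s', hs'⟩ := hqmem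
    have hxp : dist x (g ⌊s⌋) ≤ D + 1 := by
      have h2 : g ⌊s⌋ = p := hs
      rw [h2]; linarith
    have hxq : dist x (g' ⌊s'⌋) ≤ D + 1 := by
      have h2 : g' ⌊s'⌋ = q := hs'
      rw [h2]; linarith
    set i : ℤ := ⌊s⌋ with hidef
    set j : ℤ := ⌊s'⌋ with hjdef
    clear_value i j
    clear hs hs' hpd hqd
    -- near case helper
    have hnear : ∀ (w : X) (i₀ : ℤ), dist x w ≤ D + 1 → 0 ≤ i₀ → i₀ ≤ N →
        dist w (σ (a + i₀*R)) ≤ R → Metric.infDist x (σ '' Set.Icc a b) ≤ D + lam := by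
      intro w i₀ hxw h0 h1 hwσ
      refine le_trans (Metric.infDist_le_dist_of_mem (hαmem i₀ h0 h1)) ?_
      calc dist x (σ (a + i₀*R)) ≤ dist x w + dist w (σ (a + i₀*R)) := dist_triangle _ _ _
        _ ≤ D + 1 + R := by linarith
        _ ≤ D + lam := by linarith
    have hmidnear : ∀ h : ℤ → X, (∀ i : ℤ, -1 ≤ i → i ≤ N + 1 → g i = h i) →
        ∀ i₀ : ℤ, -1 ≤ i₀ → i₀ ≤ N + 1 → dist x (h i₀) ≤ D + 1 →
        Metric.infDist x (σ '' Set.Icc a b) ≤ D + lam := by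
      intro h hsh i₀ h1 h2 hxw
      rw [← hsh i₀ h1 h2] at hxw
      by_cases hneg : i₀ = -1
      · refine hnear (g i₀) 0 hxw le_rfl hN0 ?_
        rw [hneg, hz0]
        rw [show ((0:ℤ):ℝ) = 0 from by norm_num, show a + 0 * R = a from by ring, dist_comm]
        rw [hzd]
      by_cases hpos : i₀ = N + 1
      · refine hnear (g i₀) N hxw hN0 le_rfl ?_
        rw [hpos, hy0, dist_comm, hyd]
      · refine hnear (g i₀) i₀ hxw (by omega) (by omega) ?_
        rw [Eg_mid i₀ (by omega) (by omega), dist_self]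
        linarith
    by_cases hi : -1 ≤ i ∧ i ≤ N + 1
    · exact hmidnear g (fun _ _ _ => rfl) i hi.1 hi.2 hxp
    by_cases hj : -1 ≤ j ∧ j ≤ N + 1
    · exact hmidnear g' hshare j hj.1 hj.2 hxq
    -- far cases
    have hM : k + 2*δ < R - (k + δ) := by rw [hRdef]; linarith
    have hfar : ∀ (w : X) (i₀ : ℤ), gromovProd w (g i) (g' j) ≤ k + 2*δ →
        dist w (σ (a + i₀*R)) ≤ R → 0 ≤ i₀ → i₀ ≤ N →
        Metric.infDist x (σ '' Set.Icc a b) ≤ D + lam := by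
      intro w i₀ hgp hwσ h0 h1
      have hxw : dist x w ≤ (D + 1) + 2*(k + 2*δ) + 2*δ :=
        center_lemma hhyp hgp hxp hxq
      refine le_trans (Metric.infDist_le_dist_of_mem (hαmem i₀ h0 h1)) ?_
      calc dist x (σ (a + i₀*R)) ≤ dist x w + dist w (σ (a + i₀*R)) := dist_triangle _ _ _
        _ ≤ D + 1 + 2*(k + 2*δ) + 2*δ + R := by linarith
        _ ≤ D + lam := by rw [hlamdef]; linarith
    have hiout : i ≤ -2 ∨ N + 2 ≤ i := by omega
    have hjout : j ≤ -2 ∨ N + 2 ≤ j := by omega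
    have hyσ : dist (g (N+1)) (σ (a + N*R)) ≤ R := by rw [hy0, dist_comm, hyd]
    have hzσ : dist (g (-1)) (σ (a + (0:ℤ)*R)) ≤ R := by
      rw [hz0, show ((0:ℤ):ℝ) = 0 from by norm_num, show a + 0 * R = a from by ring,
        dist_comm, hzd]
    -- the four witness bounds
    have hwit_g_fwd : N + 2 ≤ i → R - (k + δ) ≤ gromovProd (g (N+1)) (g i) (g (N+2)) := by
      intro h
      have := chain_C2' hδ hk hRchain hhyp hdg hpg i (N+2) h
      rw [show N+2-1 = N+1 from by ring] at this
      exact this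
    have hwit_g'_fwd : N + 2 ≤ j → R - (k + δ) ≤ gromovProd (g (N+1)) (g' j) (g' (N+2)) := by
      intro h
      have := chain_C2' hδ hk hRchain hhyp hdg' hpg' j (N+2) h
      rw [show N+2-1 = N+1 from by ring, ← hshare (N+1) (by omega) (by omega)] at this
      exact this
    have hwit_g_bwd : i ≤ -2 → R - (k + δ) ≤ gromovProd (g (-1)) (g i) (g (-2)) := by
      intro h
      have := chain_C2 hδ hk hRchain hhyp hdg hpg i (-2) h
      rw [show (-2:ℤ)+1 = -1 from by ring] at this
      exact this
    have hwit_g'_bwd : j ≤ -2 → R - (k + δ) ≤ gromovProd (g (-1)) (g' j) (g' (-2)) := by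
      intro h
      have := chain_C2 hδ hk hRchain hhyp hdg' hpg' j (-2) h
      rw [show (-2:ℤ)+1 = -1 from by ring, ← hshare (-1) (by omega) (by omega)] at this
      exact this
    have hwit_g'_back : j ≤ -2 → R - (k + δ) ≤ gromovProd (g (N+1)) (g' j) (g' N) := by
      intro h
      have := chain_C2 hδ hk hRchain hhyp hdg' hpg' j N (by omega)
      rw [← hshare (N+1) (by omega) (by omega)] at this
      exact this
    have hwit_g'_front : N + 2 ≤ j → R - (k + δ) ≤ gromovProd (g (-1)) (g' j) (g' 0) := by
      intro h
      have := chain_C2' hδ hk hRchain hhyp hdg' hpg' j 0 (by omega)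
      rw [show (0:ℤ)-1 = -1 from by ring, ← hshare (-1) (by omega) (by omega)] at this
      exact this
    have hgN2 : g (N+2) = u := by
      rw [show N+2 = N + 1 + ((1:ℕ):ℤ) from by omega, Eg_pos 1, hty1]
    have hg'N2 : g' (N+2) = u' := by
      rw [show N+2 = N + 1 + ((1:ℕ):ℤ) from by omega, Eg'_pos 1, hty1']
    have hgm2 : g (-2) = v := by
      rw [show (-2:ℤ) = -1 - ((1:ℕ):ℤ) from by omega, Eg_neg 1, htz1]
    have hg'm2 : g' (-2) = v' := by
      rw [show (-2:ℤ) = -1 - ((1:ℕ):ℤ) from by omega, Eg'_neg 1, htz1']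
    rcases hiout with hi2 | hi2 <;> rcases hjout with hj2 | hj2
    · -- both backward: base z
      have hmn : gromovProd (g (-1)) (g (-2)) (g' (-2)) ≤ k := by
        rw [hz0, hgm2, hg'm2]; exact hvv'
      exact hfar (g (-1)) 0
        (div_lemma hδ hhyp hM (hwit_g_bwd hi2) (hwit_g'_bwd hj2) hmn) hzσ le_rfl hN0
    · -- i backward, j forward: base z
      have hmn : gromovProd (g (-1)) (g (-2)) (g' 0) ≤ k := by
        rw [← hshare 0 (by omega) (by omega)]
        have := hpg (-1)
        rw [show (-1:ℤ)-1 = -2 from by ring, show (-1:ℤ)+1 = 0 from by ring] at this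
        exact this
      exact hfar (g (-1)) 0
        (div_lemma hδ hhyp hM (hwit_g_bwd hi2) (hwit_g'_front hj2) hmn) hzσ le_rfl hN0
    · -- i forward, j backward: base y
      have hmn : gromovProd (g (N+1)) (g (N+2)) (g' N) ≤ k := by
        rw [← hshare N (by omega) (by omega)]
        have := hpg (N+1)
        rw [show N+1-1 = N from by ring, show N+1+1 = N+2 from by ring] at this
        rw [gp_symm]
        exact this
      exact hfar (g (N+1)) N
        (div_lemma hδ hhyp hM (hwit_g_fwd hi2) (hwit_g'_back hj2) hmn) hyσ hN0 le_rfl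
    · -- both forward: base y
      have hmn : gromovProd (g (N+1)) (g (N+2)) (g' (N+2)) ≤ k := by
        rw [hy0, hgN2, hg'N2]; exact huu'
      exact hfar (g (N+1)) N
        (div_lemma hδ hhyp hM (hwit_g_fwd hi2) (hwit_g'_fwd hj2) hmn) hyσ hN0 le_rfl
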